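/- Let T̂* ⊆ {1,…,p} with ŝ* = |T̂*|, and let η̃ ∈ ℝ^p satisfy η̃_j = 0 for all j ∉ T̂* (for instance, the post-model-selection logistic estimator that minimizes Λ over vectors supported on T̂*). Let φ > 0 satisfy φ·‖δ‖² ≤ ‖√w_i·x_i'δ‖²_{2,n} for every δ ∈ ℝ^p with ‖δ‖₀ ≤ ŝ* + s, and let q̄ > 0 satisfy q̄·(1/n)∑_{i=1}^n w_i·|x_i'δ|³ ≤ ((1/n)∑_{i=1}^n w_i·(x_i'δ)²)^{3/2} for every δ with ‖δ‖₀ ≤ ŝ* + s. Let ε ≥ 0 be such that Λ(η̃) − Λ(η₀) ≤ ε². If q̄ > 6·√(ŝ* + s)·‖∇Λ(η₀)‖_∞/√φ and q̄ > 6·ε, then ‖√w_i·x_i'(η̃ − η₀)‖_{2,n} ≤ √3·ε + 3·√(ŝ* + s)·‖∇Λ(η₀)‖_∞/√φ. -/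

import Mathlib

open Finset

/-- The logistic link function `G(t) = exp t / (1 + exp t)`. -/
noncomputable def logistic (t : ℝ) : ℝ := Real.exp t / (1 + Real.exp t)

/-- Inner product `x_i'η` of the `i`-th design vector with `η`. -/
def xdot {n p : ℕ} (x : Fin n → Fin p → ℝ) (η : Fin p → ℝ) (i : Fin n) : ℝ :=
  ∑ j, x i j * η j

/-- Average logistic negative log-likelihood
`Λ(η) = (1/n)∑ᵢ [log(1+exp(x_i'η)) − y_i·(x_i'η)]`. -/
noncomputable def Lam {n p : ℕ} (x : Fin n → Fin p → ℝ) (y : Fin n → ℝ)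
    (η : Fin p → ℝ) : ℝ :=
  (1 / (n : ℝ)) * ∑ i, (Real.log (1 + Real.exp (xdot x η i)) - y i * xdot x η i)

/-- Gradient of `Λ`: `∇Λ(η) = (1/n)∑ᵢ (G(x_i'η) − y_i)·x_i`. -/
noncomputable def gradLam {n p : ℕ} (x : Fin n → Fin p → ℝ) (y : Fin n → ℝ)
    (η : Fin p → ℝ) (j : Fin p) : ℝ :=
  (1 / (n : ℝ)) * ∑ i, (logistic (xdot x η i) - y i) * x i j

/-- Sup-norm `‖∇Λ(η)‖_∞` of the gradient of `Λ`. -/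
noncomputable def gradLamSup {n p : ℕ} (x : Fin n → Fin p → ℝ) (y : Fin n → ℝ)
    (η : Fin p → ℝ) : ℝ :=
  ⨆ j : Fin p, |gradLam x y η j|

/-- The logistic weights `w_i = G(x_i'η₀)·(1 − G(x_i'η₀))`. -/
noncomputable def wgt {n p : ℕ} (x : Fin n → Fin p → ℝ) (η₀ : Fin p → ℝ) (i : Fin n) : ℝ :=
  logistic (xdot x η₀ i) * (1 - logistic (xdot x η₀ i))

/-- Weighted prediction norm `‖√w_i·x_i'δ‖_{2,n} = ((1/n)∑ᵢ w_i (x_i'δ)²)^{1/2}`. -/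
noncomputable def predNorm {n p : ℕ} (x : Fin n → Fin p → ℝ) (w : Fin n → ℝ)
    (δ : Fin p → ℝ) : ℝ :=
  Real.sqrt ((1 / (n : ℝ)) * ∑ i, w i * xdot x δ i ^ 2)

/-- Support of a coefficient vector. -/
noncomputable def supp {p : ℕ} (η : Fin p → ℝ) : Finset (Fin p) :=
  Finset.univ.filter (fun j => η j ≠ 0)

/-- ℓ1 norm of a vector in `ℝ^p`. -/
def l1norm {p : ℕ} (δ : Fin p → ℝ) : ℝ := ∑ j, |δ j|

/-- The restricted cone `Δ_c̄ = {δ : ‖δ_{T^c}‖₁ ≤ c̄·‖δ_T‖₁}` for a support set `T`. -/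
noncomputable def inCone {p : ℕ} (T : Finset (Fin p)) (cbar : ℝ) (δ : Fin p → ℝ) : Prop :=
  ∑ j ∈ Tᶜ, |δ j| ≤ cbar * ∑ j ∈ T, |δ j|

lemma one_add_exp_pos (t : ℝ) : (0:ℝ) < 1 + Real.exp t := by positivity

lemma logistic_pos (t : ℝ) : 0 < logistic t := by
  unfold logistic; positivity

lemma logistic_lt_one (t : ℝ) : logistic t < 1 := by
  unfold logistic
  rw [div_lt_one (one_add_exp_pos t)]; linarith

lemma wpos (t : ℝ) : 0 < logistic t * (1 - logistic t) :=
  mul_pos (logistic_pos t) (by linarith [logistic_lt_one t])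

lemma logistic_neg (t : ℝ) : logistic (-t) = 1 - logistic t := by
  unfold logistic
  rw [Real.exp_neg]
  have h := (Real.exp_pos t).ne'
  field_simp
  ring

lemma L_neg (t : ℝ) : Real.log (1 + Real.exp (-t)) = Real.log (1 + Real.exp t) - t := by
  have h : (1 : ℝ) + Real.exp (-t) = (1 + Real.exp t) * Real.exp (-t) := by
    rw [Real.exp_neg]
    have h := (Real.exp_pos t).ne'
    field_simp
    ring
  rw [h, Real.log_mul (one_add_exp_pos t).ne' (Real.exp_pos _).ne', Real.log_exp]
  ring

lemma weq (t : ℝ) : logistic t * (1 - logistic t) = Real.exp t / (1 + Real.exp t)^2 := by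
  unfold logistic
  have h := (one_add_exp_pos t).ne'
  field_simp
  ring

lemma hasDerivAt_L (t : ℝ) : HasDerivAt (fun s => Real.log (1 + Real.exp s)) (logistic t) t := by
  have h := ((Real.hasDerivAt_exp t).const_add 1).log (one_add_exp_pos t).ne'
  simpa [logistic] using h

lemma hasDerivAt_logistic (t : ℝ) :
    HasDerivAt logistic (logistic t * (1 - logistic t)) t := by
  have h := (Real.hasDerivAt_exp t).div ((Real.hasDerivAt_exp t).const_add 1) (one_add_exp_pos t).ne'
  rw [weq t]
  exact h.congr_deriv (by ring)

lemma w_lower {a h : ℝ} (hh : 0 ≤ h) :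
    logistic a * (1 - logistic a) * (1 - h) ≤ logistic (a+h) * (1 - logistic (a+h)) := by
  have step1 : logistic a * (1 - logistic a) * (1 - h)
      ≤ logistic a * (1 - logistic a) * Real.exp (-h) := by
    have := Real.add_one_le_exp (-h)
    have := wpos a
    nlinarith
  refine step1.trans ?_
  rw [weq a, weq (a+h), Real.exp_add]
  set u := Real.exp a with hu
  set v := Real.exp h with hv
  have hupos : 0 < u := Real.exp_pos a
  have hv1 : 1 ≤ v := by
    rw [hv]; calc (1:ℝ) = Real.exp 0 := (Real.exp_zero).symm
    _ ≤ Real.exp h := Real.exp_le_exp.2 hh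
  have hvpos : 0 < v := lt_of_lt_of_le one_pos hv1
  rw [Real.exp_neg, ← hv]
  rw [← div_eq_mul_inv, div_div,
    div_le_div_iff₀ (by positivity) (by positivity)]
  have key : 1 + u*v ≤ v*(1+u) := by nlinarith
  nlinarith [mul_self_le_mul_self (by positivity : (0:ℝ) ≤ 1 + u*v) key, hupos.le]

lemma key_nonneg (a : ℝ) {h : ℝ} (hh : 0 ≤ h) :
    logistic a * (1 - logistic a) * (h^2/2 - h^3/6)
      ≤ Real.log (1 + Real.exp (a+h)) - Real.log (1 + Real.exp a) - logistic a * h := by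
  set wA := logistic a * (1 - logistic a) with hwA
  set F : ℝ → ℝ := fun t => Real.log (1 + Real.exp (a+t)) - Real.log (1 + Real.exp a)
      - logistic a * t - wA*(t^2/2 - t^3/6) with hF
  set F1 : ℝ → ℝ := fun t => logistic (a+t) - logistic a - wA*(t - t^2/2) with hF1
  have hinner : ∀ t : ℝ, HasDerivAt (fun s : ℝ => a + s) 1 t := fun t =>
    (hasDerivAt_id t).const_add a
  have hdF : ∀ t : ℝ, HasDerivAt F (F1 t) t := by
    intro t
    have h1 : HasDerivAt (fun s : ℝ => Real.log (1 + Real.exp (a+s))) (logistic (a+t)) t := by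
      exact ((hasDerivAt_L (a+t)).comp t (hinner t)).congr_deriv (mul_one _)
    have h2 : HasDerivAt (fun s : ℝ => logistic a * s) (logistic a) t := by
      simpa using (hasDerivAt_id t).const_mul (logistic a)
    have h3 : HasDerivAt (fun s : ℝ => wA*(s^2/2 - s^3/6)) (wA*(t - t^2/2)) t := by
      have hp2 : HasDerivAt (fun s : ℝ => s^2) (2*t) t := by simpa using hasDerivAt_pow 2 t
      have hp3 : HasDerivAt (fun s : ℝ => s^3) (3*t^2) t := by simpa using hasDerivAt_pow 3 t
      have := ((hp2.div_const 2).sub (hp3.div_const 6)).const_mul wA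
      exact this.congr_deriv (by ring)
    exact ((h1.sub_const _).sub h2).sub h3
  have hdF1 : ∀ t : ℝ, HasDerivAt F1 (logistic (a+t) * (1 - logistic (a+t)) - wA*(1-t)) t := by
    intro t
    have h1 : HasDerivAt (fun s : ℝ => logistic (a+s)) (logistic (a+t) * (1 - logistic (a+t))) t := by
      exact ((hasDerivAt_logistic (a+t)).comp t (hinner t)).congr_deriv (mul_one _)
    have h3 : HasDerivAt (fun s : ℝ => wA*(s - s^2/2)) (wA*(1-t)) t := by
      have hp2 : HasDerivAt (fun s : ℝ => s^2) (2*t) t := by simpa using hasDerivAt_pow 2 t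
      have := ((hasDerivAt_id t).sub (hp2.div_const 2)).const_mul wA
      exact this.congr_deriv (by ring)
    exact (h1.sub_const _).sub h3
  have hmono1 : MonotoneOn F1 (Set.Ici (0:ℝ)) := by
    apply monotoneOn_of_deriv_nonneg (convex_Ici 0)
    · exact fun t _ => (hdF1 t).differentiableAt.continuousAt.continuousWithinAt
    · exact fun t _ => (hdF1 t).differentiableAt.differentiableWithinAt
    · intro t ht
      rw [interior_Ici] at ht
      rw [(hdF1 t).deriv]
      have := w_lower (a := a) (h := t) (le_of_lt ht)
      simp only [hwA]
      linarith
  have hF1nonneg : ∀ t ∈ Set.Ici (0:ℝ), 0 ≤ F1 t := by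
    intro t ht
    have h0 : F1 0 = 0 := by simp [hF1]
    have := hmono1 (Set.self_mem_Ici) ht ht
    rw [h0] at this; exact this
  have hmono : MonotoneOn F (Set.Ici (0:ℝ)) := by
    apply monotoneOn_of_deriv_nonneg (convex_Ici 0)
    · exact fun t _ => (hdF t).differentiableAt.continuousAt.continuousWithinAt
    · exact fun t _ => (hdF t).differentiableAt.differentiableWithinAt
    · intro t ht
      rw [interior_Ici] at ht
      rw [(hdF t).deriv]
      exact hF1nonneg t (Set.mem_Ici.2 (le_of_lt ht))
  have h0 : F 0 = 0 := by simp [hF]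
  have := hmono (Set.self_mem_Ici) hh hh
  rw [h0] at this
  simp only [hF] at this
  linarith

lemma key (a h : ℝ) :
    logistic a * (1 - logistic a) * (h^2/2 - |h|^3/6)
      ≤ Real.log (1 + Real.exp (a+h)) - Real.log (1 + Real.exp a) - logistic a * h := by
  rcases le_or_gt 0 h with hh | hh
  · rw [abs_of_nonneg hh]; exact key_nonneg a hh
  · have hkey := key_nonneg (-a) (neg_nonneg.2 hh.le)
    rw [abs_of_neg hh]
    have e1 : -a + -h = -(a+h) := by ring
    rw [e1, L_neg (a+h), L_neg a, logistic_neg a] at hkey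
    have := logistic_lt_one a
    nlinarith [hkey]

lemma L_convex : ConvexOn ℝ Set.univ (fun t => Real.log (1 + Real.exp t)) := by
  apply convexOn_of_deriv2_nonneg convex_univ
  · exact fun t _ => (hasDerivAt_L t).differentiableAt.continuousAt.continuousWithinAt
  · exact fun t _ => (hasDerivAt_L t).differentiableAt.differentiableWithinAt
  · intro t _
    have hd : deriv (fun s => Real.log (1 + Real.exp s)) = logistic := by
      funext s; exact (hasDerivAt_L s).deriv
    rw [hd]
    exact (hasDerivAt_logistic t).differentiableAt.differentiableWithinAt
  · intro t _
    have hd : deriv (fun s => Real.log (1 + Real.exp s)) = logistic := by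
      funext s; exact (hasDerivAt_L s).deriv
    show 0 ≤ deriv (deriv fun s => Real.log (1 + Real.exp s)) t
    rw [hd, (hasDerivAt_logistic t).deriv]
    exact (wpos t).le

lemma L_segment (a c lam : ℝ) (h0 : 0 ≤ lam) (h1 : lam ≤ 1) :
    Real.log (1 + Real.exp (a + lam*c))
      ≤ (1-lam) * Real.log (1 + Real.exp a) + lam * Real.log (1 + Real.exp (a+c)) := by
  have := L_convex.2 (Set.mem_univ a) (Set.mem_univ (a+c)) (by linarith : (0:ℝ) ≤ 1 - lam) h0
    (by ring : (1-lam) + lam = 1)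
  simpa [smul_eq_mul, show (1-lam)*a + lam*(a+c) = a + lam*c by ring] using this

lemma contra_num (u ε A : ℝ) (hε : 0 ≤ ε) (hA : 0 ≤ A)
    (hu : Real.sqrt 3 * ε + 3*A < u) (hub : 11/30*u^2 - A*u ≤ ε^2) : False := by
  set r := Real.sqrt 3 with hrdef
  have hr : r^2 = 3 := Real.sq_sqrt (by norm_num)
  have hr0 : (0:ℝ) < r := by rw [hrdef]; positivity
  have hd : 0 < u - r*ε - 3*A := by linarith
  nlinarith [mul_pos hd hd, mul_nonneg (mul_nonneg hr0.le hε) hd.le,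
    mul_nonneg hA hd.le, mul_nonneg (mul_nonneg hr0.le hε) hA,
    sq_nonneg ε, sq_nonneg A]


/-- Rate of convergence of the post-model-selection logistic regression estimator
(Lemma B.7): if `η̃` is supported on `T̂*` with `ŝ* = |T̂*|`, `φ` is a minimal sparse
eigenvalue and `q̄` a nonlinear impact coefficient at sparsity `ŝ* + s`,
`Λ(η̃) − Λ(η₀) ≤ ε²`, `q̄ > 6√(ŝ*+s)‖∇Λ(η₀)‖_∞/√φ`, and `q̄ > 6ε`, then
`‖√w_i x_i'(η̃−η₀)‖_{2,n} ≤ √3·ε + 3√(ŝ*+s)‖∇Λ(η₀)‖_∞/√φ`. -/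
theorem post_selection_logistic_rate {n p : ℕ} (hn : 0 < n) (hp : 0 < p)
    (x : Fin n → Fin p → ℝ) (y : Fin n → ℝ) (hy : ∀ i, y i = 0 ∨ y i = 1)
    (η₀ : Fin p → ℝ) (hs : 1 ≤ (supp η₀).card)
    (That : Finset (Fin p))
    (ηtil : Fin p → ℝ) (hsupp : ∀ j, j ∉ That → ηtil j = 0)
    (φ : ℝ) (hφ : 0 < φ)
    (hSE : ∀ δ : Fin p → ℝ, (supp δ).card ≤ That.card + (supp η₀).card →
      φ * ∑ j, δ j ^ 2 ≤ predNorm x (wgt x η₀) δ ^ 2)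
    (qbar : ℝ) (hqbar : 0 < qbar)
    (hq : ∀ δ : Fin p → ℝ, (supp δ).card ≤ That.card + (supp η₀).card →
      qbar * ((1 / (n : ℝ)) * ∑ i, wgt x η₀ i * |xdot x δ i| ^ 3)
        ≤ ((1 / (n : ℝ)) * ∑ i, wgt x η₀ i * xdot x δ i ^ 2) ^ ((3 : ℝ) / 2))
    (ε : ℝ) (hε : 0 ≤ ε)
    (hLam : Lam x y ηtil - Lam x y η₀ ≤ ε ^ 2)
    (hq1 : 6 * Real.sqrt ((That.card : ℝ) + (supp η₀).card) * gradLamSup x y η₀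
        / Real.sqrt φ < qbar)
    (hq2 : 6 * ε < qbar) :
    predNorm x (wgt x η₀) (ηtil - η₀)
      ≤ Real.sqrt 3 * ε
        + 3 * Real.sqrt ((That.card : ℝ) + (supp η₀).card) * gradLamSup x y η₀
            / Real.sqrt φ := by
  classical
  by_contra hcon
  push_neg at hcon
  set G := gradLamSup x y η₀ with hGdef
  set s' : ℝ := (That.card : ℝ) + (supp η₀).card with hs'def
  set A : ℝ := Real.sqrt s' * G / Real.sqrt φ with hAdef
  -- basic positivity facts
  have hn' : (0:ℝ) < (n:ℝ) := by exact_mod_cast hn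
  have hinvn : (0:ℝ) ≤ 1/(n:ℝ) := by positivity
  have hGnonneg : 0 ≤ G := by
    have j0 : Fin p := ⟨0, hp⟩
    have := le_ciSup (f := fun j : Fin p => |gradLam x y η₀ j|)
      (Set.Finite.bddAbove (Set.finite_range _)) j0
    exact le_trans (abs_nonneg _) this
  have hgle : ∀ j, |gradLam x y η₀ j| ≤ G := fun j =>
    le_ciSup (f := fun j : Fin p => |gradLam x y η₀ j|)
      (Set.Finite.bddAbove (Set.finite_range _)) j
  have hs'nonneg : (0:ℝ) ≤ s' := by rw [hs'def]; positivity
  have hAnonneg : 0 ≤ A := by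
    rw [hAdef]; positivity
  have hA6 : 6 * A < qbar := by
    have : 6 * Real.sqrt s' * G / Real.sqrt φ = 6 * A := by rw [hAdef]; ring
    rw [← this]; exact hq1
  -- goal shape : hcon : √3 ε + 3 * √s' * G / √φ < predNorm ...
  have hcon' : Real.sqrt 3 * ε + 3 * A < predNorm x (wgt x η₀) (ηtil - η₀) := by
    have : 3 * Real.sqrt s' * G / Real.sqrt φ = 3 * A := by rw [hAdef]; ring
    calc Real.sqrt 3 * ε + 3 * A = Real.sqrt 3 * ε + 3 * Real.sqrt s' * G / Real.sqrt φ := by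
          rw [this]
      _ < _ := hcon
  set t := predNorm x (wgt x η₀) (ηtil - η₀) with htdef
  have hB0 : 0 ≤ Real.sqrt 3 * ε + 3 * A := by positivity
  have htpos : 0 < t := lt_of_le_of_lt hB0 hcon'
  have hBq : Real.sqrt 3 * ε + 3 * A < 4/5 * qbar := by
    have h18 : Real.sqrt 3 ≤ 1.8 := by
      rw [show (1.8:ℝ) = Real.sqrt (1.8^2) from (Real.sqrt_sq (by norm_num)).symm]
      exact Real.sqrt_le_sqrt (by norm_num)
    nlinarith [Real.sqrt_nonneg (3:ℝ)]
  set u := min t (4/5 * qbar) with hudef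
  have hu_gt : Real.sqrt 3 * ε + 3 * A < u := lt_min hcon' hBq
  have hupos : 0 < u := lt_of_le_of_lt hB0 hu_gt
  have hule : u ≤ t := min_le_left _ _
  have huq : u ≤ 4/5 * qbar := min_le_right _ _
  set lam := u / t with hlamdef
  have hlam0 : 0 ≤ lam := le_of_lt (div_pos hupos htpos)
  have hlam1 : lam ≤ 1 := (div_le_one htpos).2 hule
  have hlamt : lam * t = u := div_mul_cancel₀ u htpos.ne'
  set δ : Fin p → ℝ := fun j => lam * (ηtil j - η₀ j) with hδdef
  -- xdot linearity
  have hxd : ∀ i, xdot x δ i = lam * xdot x (ηtil - η₀) i := by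
    intro i
    simp only [hδdef, xdot, Pi.sub_apply, Finset.mul_sum]
    exact Finset.sum_congr rfl fun j _ => by ring
  have hxd2 : ∀ i, xdot x (ηtil - η₀) i = xdot x ηtil i - xdot x η₀ i := by
    intro i
    simp only [xdot, Pi.sub_apply, mul_sub, Finset.sum_sub_distrib]
  -- support bound
  have hcard : (supp δ).card ≤ That.card + (supp η₀).card := by
    have hsub : supp δ ⊆ That ∪ supp η₀ := by
      intro j hj
      simp only [supp, Finset.mem_filter, Finset.mem_univ, true_and] at hj
      by_contra hnot
      rw [Finset.mem_union] at hnot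
      push_neg at hnot
      have h1 : ηtil j = 0 := hsupp j hnot.1
      have h2 : η₀ j = 0 := by
        have := hnot.2
        simp only [supp, Finset.mem_filter, Finset.mem_univ, true_and, not_not] at this
        exact this
      apply hj
      rw [hδdef]
      simp [h1, h2]
    exact le_trans (Finset.card_le_card hsub) (Finset.card_union_le _ _)
  -- prediction norm of δ
  set Q : ℝ := (1 / (n : ℝ)) * ∑ i, wgt x η₀ i * xdot x (ηtil - η₀) i ^ 2 with hQdef
  have hQnonneg : 0 ≤ Q := by
    apply mul_nonneg hinvn
    apply Finset.sum_nonneg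
    intro i _
    exact mul_nonneg (wpos _).le (sq_nonneg _)
  have htQ : t^2 = Q := by rw [htdef, predNorm, Real.sq_sqrt hQnonneg, hQdef]
  set S2 : ℝ := (1 / (n : ℝ)) * ∑ i, wgt x η₀ i * xdot x δ i ^ 2 with hS2def
  have hS2 : S2 = u^2 := by
    rw [hS2def]
    have : ∀ i : Fin n, wgt x η₀ i * xdot x δ i ^ 2
        = lam^2 * (wgt x η₀ i * xdot x (ηtil - η₀) i ^ 2) := by
      intro i; rw [hxd i]; ring
    rw [Finset.sum_congr rfl fun i _ => this i, ← Finset.mul_sum]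
    have : (1/(n:ℝ)) * (lam^2 * ∑ i, wgt x η₀ i * xdot x (ηtil - η₀) i ^ 2) = lam^2 * Q := by
      rw [hQdef]; ring
    rw [this, ← hlamt]
    rw [htQ.symm] -- Q = t^2
    ring
  have hnn : 0 ≤ (1 / (n : ℝ)) * ∑ i, wgt x η₀ i * xdot x δ i ^ 2 :=
    mul_nonneg hinvn (Finset.sum_nonneg fun i _ => mul_nonneg (wpos _).le (sq_nonneg _))
  have hpredδ : predNorm x (wgt x η₀) δ ^ 2 = u ^ 2 := by
    rw [predNorm, Real.sq_sqrt hnn]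
    exact hS2
  -- the cube term
  set R3 : ℝ := (1 / (n : ℝ)) * ∑ i, wgt x η₀ i * |xdot x δ i| ^ 3 with hR3def
  have hR3 : R3 ≤ u^3 / qbar := by
    have h1 := hq δ hcard
    have h2 : ((1 / (n : ℝ)) * ∑ i, wgt x η₀ i * xdot x δ i ^ 2) ^ ((3:ℝ)/2) = u^3 := by
      have e1 : (1 / (n : ℝ)) * ∑ i, wgt x η₀ i * xdot x δ i ^ 2 = u^2 := hS2
      rw [e1, ← Real.rpow_natCast u 2, ← Real.rpow_mul hupos.le]
      norm_num
    rw [h2] at h1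
    have h1' : qbar * R3 ≤ u^3 := h1
    rw [le_div_iff₀ hqbar]
    linarith
  -- gradient term
  set E : ℝ := ∑ j, gradLam x y η₀ j * δ j with hEdef
  have hE : -(A*u) ≤ E := by
    set S : Finset (Fin p) := supp δ with hSdef
    have hN : 0 ≤ ∑ j, δ j ^ 2 := Finset.sum_nonneg fun j _ => sq_nonneg _
    have hNle : ∑ j, δ j ^ 2 ≤ u^2 / φ := by
      have := hSE δ hcard
      rw [hpredδ] at this
      rw [le_div_iff₀' hφ]
      exact this
    have hEsum : E = ∑ j ∈ S, gradLam x y η₀ j * δ j := by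
      rw [hEdef, hSdef, supp]
      symm
      apply Finset.sum_filter_of_ne
      intro j _ hne
      intro h0
      exact hne (by rw [h0, mul_zero])
    have habs : |E| ≤ G * ∑ j ∈ S, |δ j| := by
      rw [hEsum]
      calc |∑ j ∈ S, gradLam x y η₀ j * δ j| ≤ ∑ j ∈ S, |gradLam x y η₀ j * δ j| :=
            Finset.abs_sum_le_sum_abs _ _
        _ ≤ ∑ j ∈ S, G * |δ j| := by
            apply Finset.sum_le_sum
            intro j _
            rw [abs_mul]
            exact mul_le_mul_of_nonneg_right (hgle j) (abs_nonneg _)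
        _ = G * ∑ j ∈ S, |δ j| := by rw [Finset.mul_sum]
    have hCS : (∑ j ∈ S, |δ j|)^2 ≤ (S.card : ℝ) * ∑ j, δ j ^ 2 := by
      have h1 : (∑ j ∈ S, 1 * |δ j|)^2 ≤ (∑ j ∈ S, (1:ℝ)^2) * ∑ j ∈ S, |δ j|^2 :=
        Finset.sum_mul_sq_le_sq_mul_sq S _ _
      simp only [one_mul, one_pow, Finset.sum_const, nsmul_eq_mul, mul_one, sq_abs] at h1
      calc (∑ j ∈ S, |δ j|)^2 ≤ (S.card : ℝ) * ∑ j ∈ S, δ j ^ 2 := h1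
        _ ≤ (S.card : ℝ) * ∑ j, δ j ^ 2 := by
            apply mul_le_mul_of_nonneg_left _ (Nat.cast_nonneg _)
            exact Finset.sum_le_sum_of_subset_of_nonneg (Finset.subset_univ S)
              (fun j _ _ => sq_nonneg _)
    have hcard' : (S.card : ℝ) ≤ s' := by
      rw [hs'def]
      exact_mod_cast hcard
    have hl1 : ∑ j ∈ S, |δ j| ≤ Real.sqrt s' * (u / Real.sqrt φ) := by
      have h0 : 0 ≤ ∑ j ∈ S, |δ j| := Finset.sum_nonneg fun j _ => abs_nonneg _
      have h1 : (∑ j ∈ S, |δ j|)^2 ≤ s' * (u^2/φ) := by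
        calc (∑ j ∈ S, |δ j|)^2 ≤ (S.card : ℝ) * ∑ j, δ j ^ 2 := hCS
          _ ≤ s' * (u^2/φ) := by
              exact mul_le_mul hcard' hNle hN hs'nonneg
      have h2 : Real.sqrt (s' * (u^2/φ)) = Real.sqrt s' * (u / Real.sqrt φ) := by
        rw [Real.sqrt_mul hs'nonneg, Real.sqrt_div (sq_nonneg u), Real.sqrt_sq hupos.le]
      calc ∑ j ∈ S, |δ j| = Real.sqrt ((∑ j ∈ S, |δ j|)^2) := (Real.sqrt_sq h0).symm
        _ ≤ Real.sqrt (s' * (u^2/φ)) := Real.sqrt_le_sqrt h1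
        _ = Real.sqrt s' * (u / Real.sqrt φ) := h2
    have hfin : |E| ≤ A * u := by
      calc |E| ≤ G * ∑ j ∈ S, |δ j| := habs
        _ ≤ G * (Real.sqrt s' * (u / Real.sqrt φ)) :=
            mul_le_mul_of_nonneg_left hl1 hGnonneg
        _ = A * u := by rw [hAdef]; ring
    linarith [neg_abs_le E]
  -- Taylor lower bound
  set ηmid : Fin p → ℝ := fun j => η₀ j + δ j with hηmiddef
  have hxdmid : ∀ i, xdot x ηmid i = xdot x η₀ i + xdot x δ i := by
    intro i; simp only [hηmiddef, xdot, mul_add, Finset.sum_add_distrib]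
  have hEE : E = (1/(n:ℝ)) * ∑ i, (logistic (xdot x η₀ i) - y i) * xdot x δ i := by
    rw [hEdef]
    simp only [gradLam, xdot, Finset.mul_sum, Finset.sum_mul]
    conv_rhs => rw [Finset.sum_comm]
    apply Finset.sum_congr rfl; intro j _
    apply Finset.sum_congr rfl; intro i _
    ring
  have hTaylor : E + S2/2 - R3/6 ≤ Lam x y ηmid - Lam x y η₀ := by
    have hpt : ∀ i : Fin n,
        (logistic (xdot x η₀ i) - y i) * xdot x δ i
          + (wgt x η₀ i * (xdot x δ i)^2)/2 - (wgt x η₀ i * |xdot x δ i|^3)/6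
        ≤ (Real.log (1 + Real.exp (xdot x ηmid i)) - y i * xdot x ηmid i)
          - (Real.log (1 + Real.exp (xdot x η₀ i)) - y i * xdot x η₀ i) := by
      intro i
      have hk := key (xdot x η₀ i) (xdot x δ i)
      rw [hxdmid i]
      unfold wgt
      have e1 : (logistic (xdot x η₀ i) - y i) * xdot x δ i
          = logistic (xdot x η₀ i) * xdot x δ i - y i * xdot x δ i := by ring
      have e2 : y i * (xdot x η₀ i + xdot x δ i)
          = y i * xdot x η₀ i + y i * xdot x δ i := by ring
      have e3 : logistic (xdot x η₀ i) * (1 - logistic (xdot x η₀ i))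
            * ((xdot x δ i)^2/2 - |xdot x δ i|^3/6)
          = (logistic (xdot x η₀ i) * (1 - logistic (xdot x η₀ i)) * (xdot x δ i)^2)/2
            - (logistic (xdot x η₀ i) * (1 - logistic (xdot x η₀ i)) * |xdot x δ i|^3)/6 := by
        ring
      linarith [hk, e1, e2, e3]
    have hsum := Finset.sum_le_sum fun i (_ : i ∈ Finset.univ) => hpt i
    have hmul := mul_le_mul_of_nonneg_left hsum hinvn
    have hrhs : (1/(n:ℝ)) * ∑ i, ((Real.log (1 + Real.exp (xdot x ηmid i)) - y i * xdot x ηmid i)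
          - (Real.log (1 + Real.exp (xdot x η₀ i)) - y i * xdot x η₀ i))
        = Lam x y ηmid - Lam x y η₀ := by
      rw [Lam, Lam, ← mul_sub, ← Finset.sum_sub_distrib]
    have hlhs : (1/(n:ℝ)) * ∑ i, ((logistic (xdot x η₀ i) - y i) * xdot x δ i
          + (wgt x η₀ i * (xdot x δ i)^2)/2 - (wgt x η₀ i * |xdot x δ i|^3)/6)
        = E + S2/2 - R3/6 := by
      rw [hEE, hS2def, hR3def]
      rw [Finset.sum_sub_distrib, Finset.sum_add_distrib, ← Finset.sum_div, ← Finset.sum_div]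
      ring
    rw [hrhs, hlhs] at hmul
    exact hmul
  -- convexity upper bound
  have hconv : Lam x y ηmid - Lam x y η₀ ≤ ε^2 := by
    have hpt : ∀ i : Fin n,
        Real.log (1 + Real.exp (xdot x ηmid i)) - y i * xdot x ηmid i
        ≤ (1-lam) * (Real.log (1 + Real.exp (xdot x η₀ i)) - y i * xdot x η₀ i)
          + lam * (Real.log (1 + Real.exp (xdot x ηtil i)) - y i * xdot x ηtil i) := by
      intro i
      have hc : xdot x ηmid i = xdot x η₀ i + lam * (xdot x ηtil i - xdot x η₀ i) := by
        rw [hxdmid i, hxd i, hxd2 i]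
      rw [hc]
      have hseg := L_segment (xdot x η₀ i) (xdot x ηtil i - xdot x η₀ i) lam hlam0 hlam1
      rw [show xdot x η₀ i + (xdot x ηtil i - xdot x η₀ i) = xdot x ηtil i by ring] at hseg
      have e2 : y i * (xdot x η₀ i + lam * (xdot x ηtil i - xdot x η₀ i))
          = (1-lam) * (y i * xdot x η₀ i) + lam * (y i * xdot x ηtil i) := by ring
      have e3 : (1-lam) * (Real.log (1 + Real.exp (xdot x η₀ i)) - y i * xdot x η₀ i)
            + lam * (Real.log (1 + Real.exp (xdot x ηtil i)) - y i * xdot x ηtil i)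
          = (1-lam) * Real.log (1 + Real.exp (xdot x η₀ i))
            + lam * Real.log (1 + Real.exp (xdot x ηtil i))
            - ((1-lam) * (y i * xdot x η₀ i) + lam * (y i * xdot x ηtil i)) := by ring
      linarith [hseg, e2, e3]
    have hsum := Finset.sum_le_sum fun i (_ : i ∈ Finset.univ) => hpt i
    have hmul := mul_le_mul_of_nonneg_left hsum hinvn
    have hrhs : (1/(n:ℝ)) * ∑ i, ((1-lam) * (Real.log (1 + Real.exp (xdot x η₀ i)) - y i * xdot x η₀ i)
          + lam * (Real.log (1 + Real.exp (xdot x ηtil i)) - y i * xdot x ηtil i))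
        = (1-lam) * Lam x y η₀ + lam * Lam x y ηtil := by
      rw [Lam, Lam, Finset.sum_add_distrib, ← Finset.mul_sum, ← Finset.mul_sum]
      ring
    rw [hrhs] at hmul
    have hmid : Lam x y ηmid - Lam x y η₀ ≤ lam * (Lam x y ηtil - Lam x y η₀) := by
      have : (1/(n:ℝ)) * ∑ i, (Real.log (1 + Real.exp (xdot x ηmid i)) - y i * xdot x ηmid i)
          = Lam x y ηmid := by rw [Lam]
      rw [this] at hmul
      linarith [hmul]
    rcases le_or_gt (Lam x y ηtil - Lam x y η₀) 0 with hd | hd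
    · have h1 : lam * (Lam x y ηtil - Lam x y η₀) ≤ 0 := mul_nonpos_of_nonneg_of_nonpos hlam0 hd
      linarith [hmid, h1, sq_nonneg ε]
    · have h2 : lam * (Lam x y ηtil - Lam x y η₀) ≤ 1 * (Lam x y ηtil - Lam x y η₀) :=
        mul_le_mul_of_nonneg_right hlam1 hd.le
      rw [one_mul] at h2
      linarith [hmid, h2, hLam]
  -- conclusion
  have hfinal : 11/30*u^2 - A*u ≤ ε^2 := by
    have h1 : -(A*u) + u^2/2 - (u^3/qbar)/6 ≤ ε^2 := by
      have := le_trans hTaylor hconv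
      rw [hS2] at this
      linarith [hR3, hE]
    have h2 : u^3 ≤ (4/5*qbar) * u^2 := by
      calc u^3 = u * u^2 := by ring
        _ ≤ (4/5*qbar) * u^2 := mul_le_mul_of_nonneg_right huq (sq_nonneg u)
    have h3 : u^3/qbar ≤ 4/5 * u^2 := by
      rw [div_le_iff₀ hqbar]; linarith
    linarith
  exact contra_num u ε A hε hAnonneg hu_gt hfinal
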